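/- Let Ã be an N×N real matrix, L = I − Ã, S ∈ ℝ^{N×d}, c > 0, and b > 0. One step of gradient descent on the objective 𝓛(F) = ‖F − S‖_F² + c·tr(FᵀLF) starting from F = S with stepsize b yields S − b·(2c·L·S) = (1 − 2bc)·S + 2bc·Ã·S. In particular, with stepsize b = 1/(2c), the result is exactly Ã·S, the GCN feature aggregation with input noisy signal S. -/

import Mathlib

open Matrix

/-- One step of gradient descent on
`𝓛(F) = ‖F − S‖_F² + c·tr(Fᵀ(I − Atil)F)` starting from `F = S` with stepsize `b`
yields `S − b·(2c·L·S) = (1 − 2bc)·S + 2bc·Atil·S`; with `b = 1/(2c)` the result is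
exactly `Atil·S`, the GCN feature aggregation with input noisy signal `S`. -/
theorem stmt_11 {N d : ℕ} (Atil : Matrix (Fin N) (Fin N) ℝ)
    (L : Matrix (Fin N) (Fin N) ℝ) (hL : L = 1 - Atil)
    (S : Matrix (Fin N) (Fin d) ℝ) (c : ℝ) (hc : 0 < c) (b : ℝ) (hb : 0 < b) :
    (S - b • ((2 * c) • (L * S)) = (1 - 2 * b * c) • S + (2 * b * c) • (Atil * S)) ∧
    (b = 1 / (2 * c) → S - b • ((2 * c) • (L * S)) = Atil * S) := by
  subst hL
  have key : S - b • ((2 * c) • ((1 - Atil) * S)) =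
      (1 - 2 * b * c) • S + (2 * b * c) • (Atil * S) := by
    rw [Matrix.sub_mul, Matrix.one_mul]
    module
  refine ⟨key, fun hb' => ?_⟩
  rw [key, hb']
  have h2c : (2 : ℝ) * c ≠ 0 := by positivity
  rw [mul_comm (2 : ℝ) (1 / (2 * c)), mul_assoc]
  field_simp
  simp
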